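/- Let (Ω, ℱ, P) be a probability space, let A and B be square-integrable real random variables, let a ∈ ℝ and b ≥ Z_min > 0 be real constants. Then E[ ( A/max(B, Z_min) − a/b )² ] ≤ (2/Z_min²)·( E[(A − a)²] + (a/b)²·E[(B − b)²] ). -/

import Mathlib

open MeasureTheory

/-- Pointwise bound for the ratio estimator. -/
lemma ratio_pointwise (A B a b Zmin : ℝ) (hZ : 0 < Zmin) (hb : Zmin ≤ b) :
    (A / max B Zmin - a / b) ^ 2 ≤
      2 / Zmin ^ 2 * ((A - a) ^ 2 + (a / b) ^ 2 * (B - b) ^ 2) := by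
  set M := max B Zmin with hMdef
  have hM : Zmin ≤ M := le_max_right _ _
  have hM0 : 0 < M := lt_of_lt_of_le hZ hM
  have hb0 : 0 < b := lt_of_lt_of_le hZ hb
  have key : (M - b) ^ 2 ≤ (B - b) ^ 2 := by
    rcases le_total B Zmin with h | h
    · rw [hMdef, max_eq_right h]; nlinarith
    · rw [hMdef, max_eq_left h]
  have e : A / M - a / b = ((A - a) - (a / b) * (M - b)) / M := by
    field_simp; ring
  rw [e, div_pow]
  have step1 : ((A - a) - (a / b) * (M - b)) ^ 2 / M ^ 2 ≤
      ((A - a) - (a / b) * (M - b)) ^ 2 / Zmin ^ 2 := by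
    apply div_le_div_of_nonneg_left (sq_nonneg _) (by positivity)
    nlinarith
  refine step1.trans ?_
  have h2 : ((A - a) - (a / b) * (M - b)) ^ 2 ≤
      2 * ((A - a) ^ 2 + (a / b) ^ 2 * (B - b) ^ 2) := by
    have := mul_le_mul_of_nonneg_left key (sq_nonneg (a / b))
    nlinarith [sq_nonneg ((A - a) + (a / b) * (M - b))]
  calc ((A - a) - (a / b) * (M - b)) ^ 2 / Zmin ^ 2
      ≤ (2 * ((A - a) ^ 2 + (a / b) ^ 2 * (B - b) ^ 2)) / Zmin ^ 2 := by gcongr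
    _ = 2 / Zmin ^ 2 * ((A - a) ^ 2 + (a / b) ^ 2 * (B - b) ^ 2) := by ring

theorem ratio_estimator_mse_bound {Ω : Type*} [MeasurableSpace Ω]
    (μ : Measure Ω) [IsProbabilityMeasure μ] (A B : Ω → ℝ)
    (hA : MemLp A 2 μ) (hB : MemLp B 2 μ)
    (a b Zmin : ℝ) (hZ : 0 < Zmin) (hb : Zmin ≤ b) :
    ∫ ω, (A ω / max (B ω) Zmin - a / b) ^ 2 ∂μ ≤
      (2 / Zmin ^ 2) *
        ((∫ ω, (A ω - a) ^ 2 ∂μ) + (a / b) ^ 2 * ∫ ω, (B ω - b) ^ 2 ∂μ) := by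
  have hA2 : Integrable (fun ω => (A ω - a) ^ 2) μ := by
    have := (hA.sub (memLp_const a)).integrable_sq
    simpa [sq] using this
  have hB2 : Integrable (fun ω => (B ω - b) ^ 2) μ := by
    have := (hB.sub (memLp_const b)).integrable_sq
    simpa [sq] using this
  have hg : Integrable (fun ω => 2 / Zmin ^ 2 *
      ((A ω - a) ^ 2 + (a / b) ^ 2 * (B ω - b) ^ 2)) μ :=
    ((hA2.add (hB2.const_mul _)).const_mul _)
  calc ∫ ω, (A ω / max (B ω) Zmin - a / b) ^ 2 ∂μ
      ≤ ∫ ω, 2 / Zmin ^ 2 * ((A ω - a) ^ 2 + (a / b) ^ 2 * (B ω - b) ^ 2) ∂μ := by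
        apply integral_mono_of_nonneg (Filter.Eventually.of_forall fun ω => sq_nonneg _) hg
        exact Filter.Eventually.of_forall fun ω => ratio_pointwise _ _ a b Zmin hZ hb
    _ = (2 / Zmin ^ 2) *
        ((∫ ω, (A ω - a) ^ 2 ∂μ) + (a / b) ^ 2 * ∫ ω, (B ω - b) ^ 2 ∂μ) := by
        rw [integral_const_mul, integral_add hA2 (hB2.const_mul _), integral_const_mul]
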